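/- Lemma 3.4 (deterministic algebra bound for one projected-GD step). Let U and U* be n×r real matrices with orthonormal columns, let b̂_k ∈ ℝ^r for k ∈ [q], let a_ki ∈ ℝⁿ and y_ki ∈ ℝ for k ∈ [q], i ∈ [m], and let η > 0, m ≥ 1. Define: GradU := Σ_{k,i}(a_kiᵀUb̂_k − y_ki)·a_ki·b̂_kᵀ (an n×r matrix); Term2 := (I − U*U*ᵀ)·Σ_{k,i}(y_ki − a_kiᵀU*U*ᵀUb̂_k)·a_ki·b̂_kᵀ; and let Hess := Σ_{k,i} vec(a_ki b̂_kᵀ)·vec(a_ki b̂_kᵀ)ᵀ be the nr×nr positive semidefinite matrix whose quadratic form satisfies vec(W)ᵀ·Hess·vec(W) = Σ_{k,i}(a_kiᵀWb̂_k)² for every n×r matrix W. Let Û⁺ := U − (η/m)·GradU, and suppose Û⁺ = U⁺R⁺ where U⁺ is n×r with orthonormal columns and R⁺ is an invertible r×r matrix. If (η/m)·‖GradU‖ < 1, then ‖(I − U*U*ᵀ)U⁺‖_F ≤ [ ‖I_{nr} − (η/m)·Hess‖·‖(I − U*U*ᵀ)U‖_F + (η/m)·‖Term2‖_F ] / (1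 − (η/m)·‖GradU‖). -/

import Mathlib

open MeasureTheory ProbabilityTheory Matrix
open scoped ENNReal

noncomputable section

/-- Euclidean norm of a finitely-indexed real vector. -/
def vnorm {ι : Type*} [Fintype ι] (v : ι → ℝ) : ℝ := Real.sqrt (∑ i, v i ^ 2)

/-- Frobenius norm of a real matrix. -/
def frob {ι ι' : Type*} [Fintype ι] [Fintype ι'] (M : Matrix ι ι' ℝ) : ℝ :=
  Real.sqrt (∑ i, ∑ j, M i j ^ 2)

/-- Spectral (ℓ2 operator) norm of a real matrix. -/
def spec {ι ι' : Type*} [Fintype ι] [Fintype ι'] (M : Matrix ι ι' ℝ) : ℝ :=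
  sSup {c | ∃ z, vnorm z = 1 ∧ c = vnorm (M.mulVec z)}

/-- Smallest singular value of an r×q matrix with r ≤ q (or of a square matrix):
the minimum of ‖Bᵀw‖ over unit vectors w. -/
def sigMin {ι ι' : Type*} [Fintype ι] [Fintype ι'] (B : Matrix ι ι' ℝ) : ℝ :=
  sInf {c | ∃ w, vnorm w = 1 ∧ c = vnorm (Bᵀ.mulVec w)}

/-- The k-th column of a matrix. -/
def matCol {ι ι' : Type*} (B : Matrix ι ι' ℝ) (k : ι') : ι → ℝ := fun i => B i k

/-- Subspace distance SD(U₁,U₂) := ‖(I − U₁U₁ᵀ)U₂‖_F. -/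
def SD {n r : ℕ} (U₁ U₂ : Matrix (Fin n) (Fin r) ℝ) : ℝ :=
  frob ((1 - U₁ * U₁ᵀ) * U₂)

/-- The standard Gaussian measure on ℝ. -/
def stdGaussian : Measure ℝ := gaussianReal 0 1

instance : IsProbabilityMeasure stdGaussian :=
  inferInstanceAs (IsProbabilityMeasure (gaussianReal 0 1))

/-- A standard Gaussian random vector in ℝⁿ (i.i.d. N(0,1) coordinates). -/
def gaussianVec (n : ℕ) : Measure (Fin n → ℝ) := Measure.pi fun _ => stdGaussian

instance (n : ℕ) : IsProbabilityMeasure (gaussianVec n) := by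
  unfold gaussianVec; infer_instance

/-- i.i.d. standard Gaussian random vectors a_{k i} ∈ ℝⁿ, k ∈ [q], i ∈ [m]. -/
def gaussianMatrices (q m n : ℕ) : Measure (Fin q → Fin m → Fin n → ℝ) :=
  Measure.pi fun _ => Measure.pi fun _ => gaussianVec n

instance (q m n : ℕ) : IsProbabilityMeasure (gaussianMatrices q m n) := by
  unfold gaussianMatrices; infer_instance

/-- Truncated spectral-initialization matrix X̂₀ = (1/m) Σ_{k,i} a_ki y_ki 1{y_ki² ≤ α} e_kᵀ. -/
def initMat {n q m : ℕ} (xstar : Fin q → Fin n → ℝ) (α : ℝ)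
    (ω : Fin q → Fin m → Fin n → ℝ) : Matrix (Fin n) (Fin q) ℝ :=
  Matrix.of fun j k => (1 / (m : ℝ)) * ∑ i, ω k i j * (ω k i ⬝ᵥ xstar k) *
    (if (ω k i ⬝ᵥ xstar k) ^ 2 ≤ α then 1 else 0)

/-- Data-dependent truncation threshold α := C̃ Σ_{k,i} y_ki² / (mq). -/
def initAlpha {n q m : ℕ} (xstar : Fin q → Fin n → ℝ) (Ctil : ℝ)
    (ω : Fin q → Fin m → Fin n → ℝ) : ℝ :=
  Ctil * ((∑ k, ∑ i, (ω k i ⬝ᵥ xstar k) ^ 2) / ((m : ℝ) * q))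

/-- β(α) := E[ζ² 1{‖x‖² ζ² ≤ α}] for ζ standard Gaussian. -/
def betaK (normx α : ℝ) : ℝ :=
  ∫ z, z ^ 2 * (if normx ^ 2 * z ^ 2 ≤ α then 1 else 0) ∂stdGaussian

/-- The least-squares estimate b̂ := (UᵀAᵀAU)⁻¹ Uᵀ Aᵀ A x. -/
def lsEst {n r m : ℕ} (U : Matrix (Fin n) (Fin r) ℝ) (A : Matrix (Fin m) (Fin n) ℝ)
    (x : Fin n → ℝ) : Fin r → ℝ :=
  ((Uᵀ * Aᵀ * A * U)⁻¹ * Uᵀ * Aᵀ * A).mulVec x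

/-- Gradient w.r.t. U of the squared loss: Σ_k Aᵀ(AUb̂_k − Ax*_k)b̂_kᵀ. -/
def gradU {n r q m : ℕ} (U : Matrix (Fin n) (Fin r) ℝ)
    (A : Fin q → Matrix (Fin m) (Fin n) ℝ) (xstar : Fin q → Fin n → ℝ)
    (bhat : Fin q → Fin r → ℝ) : Matrix (Fin n) (Fin r) ℝ :=
  ∑ k, (A k)ᵀ * vecMulVec ((A k).mulVec (U.mulVec (bhat k) - xstar k)) (bhat k)

/-- `U` has orthonormal columns whose span is the span of eigenvectors of `S`
corresponding to its `r` largest eigenvalues: `S` maps the column span of `U` into itself,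
and wᵀSw ≥ zᵀSz for unit w in the span and unit z orthogonal to it. -/
def IsTopREigenBasis {n r : ℕ} (S : Matrix (Fin n) (Fin n) ℝ)
    (U : Matrix (Fin n) (Fin r) ℝ) : Prop :=
  Uᵀ * U = 1 ∧ (∃ M : Matrix (Fin r) (Fin r) ℝ, S * U = U * M) ∧
  ∀ w z : Fin n → ℝ, (∃ cvec : Fin r → ℝ, w = U.mulVec cvec) → Uᵀ.mulVec z = 0 →
    vnorm w = 1 → vnorm z = 1 → z ⬝ᵥ S.mulVec z ≤ w ⬝ᵥ S.mulVec w

/-- Sample sizes for the 2T+1 sample splits: batch τ ∈ {0,…,T} has m τ rows,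
batch τ = T + t (t ∈ {1,…,T}) has m t rows. -/
def msize (m : ℕ → ℕ) (T τ : ℕ) : ℕ := if τ ≤ T then m τ else m (τ - T)

/-- The joint distribution of all 2T+1 independent sample batches of i.i.d. standard
Gaussian measurement vectors. -/
def splitGauss (m : ℕ → ℕ) (T q n : ℕ) :
    Measure (∀ τ : Fin (2 * T + 1), Fin q → Fin (msize m T τ.1) → Fin n → ℝ) :=
  Measure.pi fun τ => gaussianMatrices q (msize m T τ.1) n

instance (m : ℕ → ℕ) (T q n : ℕ) : IsProbabilityMeasure (splitGauss m T q n) := by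
  unfold splitGauss; infer_instance

end
section
variable {ι ι' ι'' : Type*} [Fintype ι] [Fintype ι'] [Fintype ι'']
section
variable {ι ι' : Type*} [Fintype ι] [Fintype ι']

lemma vnorm_nonneg (v : ι → ℝ) : 0 ≤ vnorm v := Real.sqrt_nonneg _

lemma vnorm_sq (v : ι → ℝ) : vnorm v ^ 2 = ∑ i, v i ^ 2 :=
  Real.sq_sqrt (Finset.sum_nonneg fun i _ => sq_nonneg _)

lemma vnorm_eq_norm (v : ι → ℝ) : vnorm v = ‖(WithLp.equiv 2 (ι → ℝ)).symm v‖ := by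
  rw [EuclideanSpace.norm_eq]
  simp [vnorm, Real.norm_eq_abs, sq_abs]

lemma abs_dot_le (u v : ι → ℝ) : |u ⬝ᵥ v| ≤ vnorm u * vnorm v := by
  rw [vnorm_eq_norm, vnorm_eq_norm]
  have hin : (inner ℝ ((WithLp.equiv 2 (ι → ℝ)).symm u) ((WithLp.equiv 2 (ι → ℝ)).symm v) : ℝ) = u ⬝ᵥ v := by
    simp [PiLp.inner_apply, RCLike.inner_apply, dotProduct, mul_comm]
  rw [← hin]
  exact abs_real_inner_le_norm _ _

lemma vnorm_add_le (u v : ι → ℝ) : vnorm (u + v) ≤ vnorm u + vnorm v := by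
  rw [vnorm_eq_norm, vnorm_eq_norm, vnorm_eq_norm]
  rw [show (WithLp.equiv 2 (ι → ℝ)).symm (u + v) = (WithLp.equiv 2 (ι → ℝ)).symm u + (WithLp.equiv 2 (ι → ℝ)).symm v from rfl]
  exact norm_add_le _ _

lemma vnorm_smul (c : ℝ) (v : ι → ℝ) : vnorm (c • v) = |c| * vnorm v := by
  rw [vnorm_eq_norm, vnorm_eq_norm]
  rw [show (WithLp.equiv 2 (ι → ℝ)).symm (c • v) = c • (WithLp.equiv 2 (ι → ℝ)).symm v from rfl]
  simp [norm_smul, Real.norm_eq_abs]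

lemma dot_self_eq (v : ι → ℝ) : v ⬝ᵥ v = vnorm v ^ 2 := by
  rw [vnorm_sq]; simp [dotProduct, pow_two]

lemma vnorm_eq_zero {v : ι → ℝ} : vnorm v = 0 ↔ v = 0 := by
  rw [vnorm_eq_norm, norm_eq_zero]
  constructor
  · intro h; funext i; exact congrFun (congrArg (WithLp.equiv 2 (ι → ℝ)) h) i
  · intro h; subst h; rfl
end

section
variable {ι ι' ι'' : Type*} [Fintype ι] [Fintype ι'] [Fintype ι'']

lemma frob_nonneg (M : Matrix ι ι' ℝ) : 0 ≤ frob M := Real.sqrt_nonneg _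

lemma frob_sq (M : Matrix ι ι' ℝ) : frob M ^ 2 = ∑ i, ∑ j, M i j ^ 2 :=
  Real.sq_sqrt (Finset.sum_nonneg fun i _ => Finset.sum_nonneg fun j _ => sq_nonneg _)

lemma frob_eq_vnorm (M : Matrix ι ι' ℝ) : frob M = vnorm (fun p : ι × ι' => M p.1 p.2) := by
  unfold frob vnorm
  congr 1
  rw [Fintype.sum_prod_type]

/-- Row bound: each coordinate of M.mulVec z is a dot product. -/
lemma mulVec_le_frob (M : Matrix ι ι' ℝ) (z : ι' → ℝ) :
    vnorm (M.mulVec z) ≤ frob M * vnorm z := by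
  have h1 : vnorm (M.mulVec z) ^ 2 ≤ (frob M * vnorm z) ^ 2 := by
    rw [vnorm_sq, mul_pow, frob_sq, Finset.sum_mul]
    apply Finset.sum_le_sum
    intro i _
    have : M.mulVec z i = (fun j => M i j) ⬝ᵥ z := rfl
    rw [this]
    calc ((fun j => M i j) ⬝ᵥ z) ^ 2 = |(fun j => M i j) ⬝ᵥ z| ^ 2 := by rw [sq_abs]
    _ ≤ (vnorm (fun j => M i j) * vnorm z) ^ 2 := by
        apply pow_le_pow_left₀ (abs_nonneg _) (abs_dot_le _ _)
    _ = (∑ j, M i j ^ 2) * vnorm z ^ 2 := by rw [mul_pow, vnorm_sq]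
  have h2 : 0 ≤ frob M * vnorm z := mul_nonneg (frob_nonneg M) (vnorm_nonneg z)
  exact (pow_le_pow_iff_left₀ (vnorm_nonneg _) h2 two_ne_zero).mp h1

lemma spec_bddAbove (M : Matrix ι ι' ℝ) :
    BddAbove {c | ∃ z, vnorm z = 1 ∧ c = vnorm (M.mulVec z)} := by
  refine ⟨frob M, ?_⟩
  rintro c ⟨z, hz, rfl⟩
  calc vnorm (M.mulVec z) ≤ frob M * vnorm z := mulVec_le_frob M z
  _ = frob M := by rw [hz, mul_one]

lemma spec_nonneg (M : Matrix ι ι' ℝ) : 0 ≤ spec M := by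
  unfold spec
  rcases Set.eq_empty_or_nonempty {c | ∃ z, vnorm z = 1 ∧ c = vnorm (M.mulVec z)} with h | h
  · rw [h, Real.sSup_empty]
  · obtain ⟨c, z, hz, rfl⟩ := h
    exact (vnorm_nonneg _).trans (le_csSup (spec_bddAbove M) ⟨z, hz, rfl⟩)

lemma spec_le_of_forall {M : Matrix ι ι' ℝ} {C : ℝ} (hC : 0 ≤ C)
    (h : ∀ z, vnorm z = 1 → vnorm (M.mulVec z) ≤ C) : spec M ≤ C := by
  unfold spec
  rcases Set.eq_empty_or_nonempty {c | ∃ z, vnorm z = 1 ∧ c = vnorm (M.mulVec z)} with he | he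
  · rw [he, Real.sSup_empty]; exact hC
  · apply csSup_le he; rintro c ⟨z, hz, rfl⟩; exact h z hz

lemma le_spec {M : Matrix ι ι' ℝ} {z : ι' → ℝ} (hz : vnorm z = 1) :
    vnorm (M.mulVec z) ≤ spec M := le_csSup (spec_bddAbove M) ⟨z, hz, rfl⟩

lemma vnorm_zero : vnorm (0 : ι → ℝ) = 0 := by simp [vnorm]

lemma spec_mulVec_le (M : Matrix ι ι' ℝ) (v : ι' → ℝ) :
    vnorm (M.mulVec v) ≤ spec M * vnorm v := by
  by_cases hv : v = 0
  · subst hv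
    rw [Matrix.mulVec_zero]
    show vnorm (0 : ι → ℝ) ≤ _
    rw [vnorm_zero, vnorm_zero, mul_zero]
  · have hv' : vnorm v ≠ 0 := fun h => hv (vnorm_eq_zero.mp h)
    have hz : vnorm ((vnorm v)⁻¹ • v) = 1 := by
      rw [vnorm_smul, abs_of_nonneg (inv_nonneg.mpr (vnorm_nonneg v)), inv_mul_cancel₀ hv']
    have h := le_spec (M := M) hz
    rw [Matrix.mulVec_smul, vnorm_smul, abs_of_nonneg (inv_nonneg.mpr (vnorm_nonneg v))] at h
    calc vnorm (M.mulVec v) = vnorm v * ((vnorm v)⁻¹ * vnorm (M.mulVec v)) := by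
          field_simp
    _ ≤ vnorm v * spec M := mul_le_mul_of_nonneg_left h (vnorm_nonneg v)
    _ = spec M * vnorm v := mul_comm _ _

lemma dot_mulVec_eq (M : Matrix ι ι' ℝ) (x : ι → ℝ) (u : ι' → ℝ) :
    (Mᵀ.mulVec x) ⬝ᵥ u = x ⬝ᵥ (M.mulVec u) := by
  rw [Matrix.mulVec_transpose, Matrix.dotProduct_mulVec]

lemma spec_transpose_le (M : Matrix ι ι' ℝ) : spec Mᵀ ≤ spec M := by
  apply spec_le_of_forall (spec_nonneg M)
  intro x hx
  set u := Mᵀ.mulVec x with hu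
  have key : vnorm u ^ 2 ≤ spec M * vnorm u := by
    rw [← dot_self_eq]
    calc u ⬝ᵥ u = x ⬝ᵥ M.mulVec u := by rw [hu, dot_mulVec_eq]
    _ ≤ |x ⬝ᵥ M.mulVec u| := le_abs_self _
    _ ≤ vnorm x * vnorm (M.mulVec u) := abs_dot_le _ _
    _ ≤ 1 * (spec M * vnorm u) := by
        rw [hx, one_mul, one_mul]; exact spec_mulVec_le M u
    _ = spec M * vnorm u := one_mul _
  by_cases h : vnorm u = 0
  · rw [h]; exact spec_nonneg M
  · have hpos : 0 < vnorm u := lt_of_le_of_ne (vnorm_nonneg u) (Ne.symm h)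
    nlinarith [key]

lemma frob_mul_le_left (M : Matrix ι ι' ℝ) (N : Matrix ι' ι'' ℝ) :
    frob (M * N) ≤ spec M * frob N := by
  have h2 : frob (M * N) ^ 2 ≤ (spec M * frob N) ^ 2 := by
    have L : ∑ i : ι, ∑ j : ι'', (M * N) i j ^ 2 = ∑ j : ι'', ∑ i : ι, (M * N) i j ^ 2 :=
      Finset.sum_comm
    have R : ∑ k : ι', ∑ j : ι'', N k j ^ 2 = ∑ j : ι'', ∑ k : ι', N k j ^ 2 :=
      Finset.sum_comm
    rw [frob_sq, mul_pow, frob_sq, L, R, Finset.mul_sum]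
    apply Finset.sum_le_sum
    intro j _
    have hcol : ∀ i, (M * N) i j = M.mulVec (fun k => N k j) i := by
      intro i; rfl
    calc ∑ i, (M * N) i j ^ 2 = vnorm (M.mulVec (fun k => N k j)) ^ 2 := by
          rw [vnorm_sq]; exact Finset.sum_congr rfl fun i _ => by rw [hcol]
    _ ≤ (spec M * vnorm (fun k => N k j)) ^ 2 :=
        pow_le_pow_left₀ (vnorm_nonneg _) (spec_mulVec_le M _) 2
    _ = spec M ^ 2 * ∑ k, N k j ^ 2 := by rw [mul_pow, vnorm_sq]
  exact (pow_le_pow_iff_left₀ (frob_nonneg _)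
    (mul_nonneg (spec_nonneg M) (frob_nonneg N)) two_ne_zero).mp h2

lemma frob_mul_le_right (M : Matrix ι ι' ℝ) (N : Matrix ι' ι'' ℝ) :
    frob (M * N) ≤ spec Nᵀ * frob M := by
  have h2 : frob (M * N) ^ 2 ≤ (spec Nᵀ * frob M) ^ 2 := by
    rw [frob_sq, mul_pow, frob_sq, Finset.mul_sum]
    apply Finset.sum_le_sum
    intro i _
    have hrow : ∀ j, (M * N) i j = Nᵀ.mulVec (M i) j := by
      intro j
      simp [Matrix.mul_apply, Matrix.mulVec, dotProduct, Matrix.transpose_apply, mul_comm]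
    calc ∑ j, (M * N) i j ^ 2 = vnorm (Nᵀ.mulVec (M i)) ^ 2 := by
          rw [vnorm_sq]; exact Finset.sum_congr rfl fun j _ => by rw [hrow]
    _ ≤ (spec Nᵀ * vnorm (M i)) ^ 2 :=
        pow_le_pow_left₀ (vnorm_nonneg _) (spec_mulVec_le Nᵀ _) 2
    _ = spec Nᵀ ^ 2 * ∑ j, M i j ^ 2 := by rw [mul_pow, vnorm_sq]
  exact (pow_le_pow_iff_left₀ (frob_nonneg _)
    (mul_nonneg (spec_nonneg Nᵀ) (frob_nonneg M)) two_ne_zero).mp h2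
end

section
variable {ι ι' : Type*} [Fintype ι] [Fintype ι']

lemma frob_add_le (A B : Matrix ι ι' ℝ) : frob (A + B) ≤ frob A + frob B := by
  rw [frob_eq_vnorm, frob_eq_vnorm, frob_eq_vnorm]
  have h : (fun p : ι × ι' => (A + B) p.1 p.2)
      = (fun p : ι × ι' => A p.1 p.2) + (fun p : ι × ι' => B p.1 p.2) := rfl
  rw [h]
  exact vnorm_add_le _ _

lemma frob_smul (t : ℝ) (A : Matrix ι ι' ℝ) : frob (t • A) = |t| * frob A := by
  rw [frob_eq_vnorm, frob_eq_vnorm]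
  have h : (fun p : ι × ι' => (t • A) p.1 p.2) = t • (fun p : ι × ι' => A p.1 p.2) := rfl
  rw [h]
  exact vnorm_smul t _
end


set_option maxHeartbeats 1000000 in
/-- **Lemma 3.4** (deterministic algebra bound for one projected-GD step). -/
theorem lemma34 (n r q m : ℕ) (hm : 1 ≤ m) (η : ℝ) (hη : 0 < η)
    (U Ustar Uplus : Matrix (Fin n) (Fin r) ℝ) (Rplus : Matrix (Fin r) (Fin r) ℝ)
    (bhat : Fin q → Fin r → ℝ) (a : Fin q → Fin m → Fin n → ℝ) (y : Fin q → Fin m → ℝ)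
    (hU : Uᵀ * U = 1) (hUs : Ustarᵀ * Ustar = 1) (hUp : Uplusᵀ * Uplus = 1)
    (hR : IsUnit Rplus.det)
    (hQR : U - (η / (m : ℝ)) •
        (∑ k, ∑ i, (a k i ⬝ᵥ U.mulVec (bhat k) - y k i) • vecMulVec (a k i) (bhat k)) =
      Uplus * Rplus)
    (hsmall : (η / (m : ℝ)) * spec (∑ k, ∑ i,
        (a k i ⬝ᵥ U.mulVec (bhat k) - y k i) • vecMulVec (a k i) (bhat k)) < 1) :
    frob ((1 - Ustar * Ustarᵀ) * Uplus) ≤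
      (spec ((1 : Matrix (Fin n × Fin r) (Fin n × Fin r) ℝ) -
          (η / (m : ℝ)) • ∑ k, ∑ i,
            vecMulVec (fun p : Fin n × Fin r => a k i p.1 * bhat k p.2)
              (fun p : Fin n × Fin r => a k i p.1 * bhat k p.2)) *
        frob ((1 - Ustar * Ustarᵀ) * U) +
        (η / (m : ℝ)) * frob ((1 - Ustar * Ustarᵀ) *
          ∑ k, ∑ i, (y k i - a k i ⬝ᵥ (Ustar * Ustarᵀ * U).mulVec (bhat k)) •
            vecMulVec (a k i) (bhat k))) /
      (1 - (η / (m : ℝ)) * spec (∑ k, ∑ i,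
        (a k i ⬝ᵥ U.mulVec (bhat k) - y k i) • vecMulVec (a k i) (bhat k))) := by
  have hmpos : (0 : ℝ) < m := by exact_mod_cast Nat.lt_of_lt_of_le Nat.zero_lt_one hm
  set s : ℝ := η / m with hsdef
  have hs : 0 < s := div_pos hη hmpos
  set G : Matrix (Fin n) (Fin r) ℝ :=
    ∑ k, ∑ i, (a k i ⬝ᵥ U.mulVec (bhat k) - y k i) • vecMulVec (a k i) (bhat k) with hGdef
  set P : Matrix (Fin n) (Fin n) ℝ := 1 - Ustar * Ustarᵀ with hPdef
  set Hess : Matrix (Fin n × Fin r) (Fin n × Fin r) ℝ :=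
    ∑ k, ∑ i, vecMulVec (fun p : Fin n × Fin r => a k i p.1 * bhat k p.2)
      (fun p : Fin n × Fin r => a k i p.1 * bhat k p.2) with hHessdef
  set T : Matrix (Fin n) (Fin r) ℝ :=
    ∑ k, ∑ i, (y k i - a k i ⬝ᵥ (Ustar * Ustarᵀ * U).mulVec (bhat k)) •
      vecMulVec (a k i) (bhat k) with hTdef
  set c : ℝ := 1 - s * spec G with hcdef
  have hcpos : 0 < c := by rw [hcdef]; linarith [hsmall]
  -- projector facts
  have hA : Ustar * Ustarᵀ * (Ustar * Ustarᵀ) = Ustar * Ustarᵀ := by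
    rw [Matrix.mul_assoc, ← Matrix.mul_assoc Ustarᵀ, hUs, Matrix.one_mul]
  have hPP : P * P = P := by
    rw [hPdef, Matrix.sub_mul, Matrix.one_mul, Matrix.mul_sub, Matrix.mul_one, hA,
      sub_self, sub_zero]
  have hPsymm : Pᵀ = P := by
    rw [hPdef]
    simp [Matrix.transpose_sub, Matrix.transpose_mul, Matrix.transpose_one]
  -- orthonormal columns preserve norms
  have northo : ∀ (W : Matrix (Fin n) (Fin r) ℝ), Wᵀ * W = 1 → ∀ x : Fin r → ℝ,
      vnorm (W.mulVec x) = vnorm x := by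
    intro W hW x
    have h := dot_mulVec_eq Wᵀ x (W.mulVec x)
    rw [Matrix.transpose_transpose, Matrix.mulVec_mulVec, hW, Matrix.one_mulVec] at h
    rw [dot_self_eq, dot_self_eq] at h
    calc vnorm (W.mulVec x) = Real.sqrt (vnorm (W.mulVec x) ^ 2) :=
          (Real.sqrt_sq (vnorm_nonneg _)).symm
    _ = Real.sqrt (vnorm x ^ 2) := by rw [h]
    _ = vnorm x := Real.sqrt_sq (vnorm_nonneg _)
  -- contraction by projector
  have hPz : ∀ z : Fin n → ℝ, vnorm (P.mulVec z) ≤ vnorm z := by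
    intro z
    have e1 : (P.mulVec z) ⬝ᵥ (P.mulVec z) = z ⬝ᵥ (P.mulVec z) := by
      have h := dot_mulVec_eq P z (P.mulVec z)
      rw [hPsymm, Matrix.mulVec_mulVec, hPP] at h
      exact h
    have e2 : z ⬝ᵥ (P.mulVec z) =
        z ⬝ᵥ z - (Ustarᵀ.mulVec z) ⬝ᵥ (Ustarᵀ.mulVec z) := by
      rw [dot_mulVec_eq Ustar z (Ustarᵀ.mulVec z), Matrix.mulVec_mulVec]
      rw [hPdef, Matrix.sub_mulVec, Matrix.one_mulVec, dotProduct_sub]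
    have h1 : vnorm (P.mulVec z) ^ 2 ≤ vnorm z ^ 2 := by
      rw [← dot_self_eq, ← dot_self_eq, e1, e2]
      have := dot_self_eq (Ustarᵀ.mulVec z)
      nlinarith [vnorm_nonneg (Ustarᵀ.mulVec z)]
    exact (pow_le_pow_iff_left₀ (vnorm_nonneg _) (vnorm_nonneg _) two_ne_zero).mp h1
  have hspecP : spec P ≤ 1 :=
    spec_le_of_forall zero_le_one fun z hz => le_of_le_of_eq (hPz z) hz
  have hfrobP : ∀ M : Matrix (Fin n) (Fin r) ℝ, frob (P * M) ≤ frob M := by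
    intro M
    exact (frob_mul_le_left P M).trans
      (mul_le_of_le_one_left (frob_nonneg M) hspecP)
  -- lower bound on Rplus
  have hlow : ∀ w : Fin r → ℝ, c * vnorm w ≤ vnorm (Rplus.mulVec w) := by
    intro w
    have e1 : vnorm (Rplus.mulVec w) = vnorm ((Uplus * Rplus).mulVec w) := by
      rw [← Matrix.mulVec_mulVec, northo Uplus hUp]
    rw [e1, ← hQR]
    have e2 : (U - s • G).mulVec w = U.mulVec w - s • (G.mulVec w) := by
      rw [Matrix.sub_mulVec, Matrix.smul_mulVec]
    rw [e2]
    have tri : vnorm (U.mulVec w) - vnorm (s • G.mulVec w) ≤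
        vnorm (U.mulVec w - s • G.mulVec w) := by
      have h := vnorm_add_le (U.mulVec w - s • G.mulVec w) (s • G.mulVec w)
      rw [sub_add_cancel] at h
      linarith
    rw [northo U hU] at tri
    have hG1 : vnorm (s • G.mulVec w) = s * vnorm (G.mulVec w) := by
      rw [vnorm_smul, abs_of_pos hs]
    have hG2 : vnorm (G.mulVec w) ≤ spec G * vnorm w := spec_mulVec_le G w
    have hce : c = 1 - s * spec G := hcdef
    nlinarith [vnorm_nonneg w, hs.le]
  -- spectral bound on the inverse
  have hRinv : spec ((Rplus⁻¹)ᵀ) ≤ 1 / c := by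
    refine (spec_transpose_le _).trans ?_
    apply spec_le_of_forall (by positivity)
    intro z hz
    have hw := hlow (Rplus⁻¹.mulVec z)
    rw [Matrix.mulVec_mulVec, Matrix.mul_nonsing_inv _ hR, Matrix.one_mulVec, hz] at hw
    rw [le_div_iff₀ hcpos, mul_comm]
    exact hw
  have hCeq : Uplus = (U - s • G) * Rplus⁻¹ := by
    rw [hQR, Matrix.mul_assoc, Matrix.mul_nonsing_inv _ hR, Matrix.mul_one]
  have main1 : frob (P * Uplus) ≤ (1 / c) * frob (P * (U - s • G)) := by
    rw [hCeq, ← Matrix.mul_assoc]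
    exact (frob_mul_le_right _ _).trans
      (mul_le_mul_of_nonneg_right hRinv (frob_nonneg _))
  -- decomposition of the gradient
  set H₀ : Matrix (Fin n) (Fin r) ℝ :=
    ∑ k, ∑ i, (a k i ⬝ᵥ (P * U).mulVec (bhat k)) • vecMulVec (a k i) (bhat k) with hH₀def
  have hGdecomp : G = H₀ - T := by
    rw [hGdef, hH₀def, hTdef, ← Finset.sum_sub_distrib]
    refine Finset.sum_congr rfl fun k _ => ?_
    rw [← Finset.sum_sub_distrib]
    refine Finset.sum_congr rfl fun i _ => ?_
    rw [← sub_smul]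
    congr 1
    have hVm : (P * U).mulVec (bhat k) =
        U.mulVec (bhat k) - (Ustar * Ustarᵀ * U).mulVec (bhat k) := by
      rw [hPdef, Matrix.sub_mul, Matrix.one_mul, Matrix.sub_mulVec]
    rw [hVm, dotProduct_sub]
    ring
  have hPV : P * (P * U) = P * U := by rw [← Matrix.mul_assoc, hPP]
  have hD : P * (U - s • G) = P * (P * U - s • H₀) + s • (P * T) := by
    have l1 : P * (U - s • (H₀ - T)) = P * U - s • (P * H₀) + s • (P * T) := by
      rw [Matrix.mul_sub, Matrix.mul_smul, Matrix.mul_sub, smul_sub]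
      abel
    have l2 : P * (P * U - s • H₀) = P * U - s • (P * H₀) := by
      rw [Matrix.mul_sub, hPV, Matrix.mul_smul]
    rw [hGdecomp, l1, l2]
  -- vectorization identity
  have key : ∀ pp : Fin n × Fin r, (P * U - s • H₀) pp.1 pp.2 =
      ((1 - s • Hess).mulVec (fun pq : Fin n × Fin r => (P * U) pq.1 pq.2)) pp := by
    intro pp
    set x : Fin n × Fin r → ℝ := fun pq => (P * U) pq.1 pq.2 with hx
    have hdot : ∀ k i, (∑ pq : Fin n × Fin r, (a k i pq.1 * bhat k pq.2) * x pq)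
        = a k i ⬝ᵥ (P * U).mulVec (bhat k) := by
      intro k i
      rw [Fintype.sum_prod_type]
      simp only [dotProduct, Matrix.mulVec, Finset.mul_sum, hx]
      refine Finset.sum_congr rfl fun j _ => Finset.sum_congr rfl fun l _ => ?_
      ring
    have hHa : (Hess.mulVec x) pp = ∑ k, ∑ i,
        (a k i pp.1 * bhat k pp.2) * (a k i ⬝ᵥ (P * U).mulVec (bhat k)) := by
      have h0 : (Hess.mulVec x) pp = ∑ pq, Hess pp pq * x pq := by
        simp [Matrix.mulVec, dotProduct]
      rw [h0]
      calc ∑ pq, Hess pp pq * x pq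
          = ∑ pq, ∑ k, ∑ i, (a k i pp.1 * bhat k pp.2) *
              ((a k i pq.1 * bhat k pq.2) * x pq) := by
            refine Finset.sum_congr rfl fun pq _ => ?_
            rw [hHessdef]
            simp only [Matrix.sum_apply, Matrix.vecMulVec_apply]
            rw [Finset.sum_mul]
            refine Finset.sum_congr rfl fun k _ => ?_
            rw [Finset.sum_mul]
            exact Finset.sum_congr rfl fun i _ => by ring
        _ = ∑ k, ∑ pq, ∑ i, (a k i pp.1 * bhat k pp.2) *
              ((a k i pq.1 * bhat k pq.2) * x pq) := Finset.sum_comm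
        _ = ∑ k, ∑ i, ∑ pq, (a k i pp.1 * bhat k pp.2) *
              ((a k i pq.1 * bhat k pq.2) * x pq) :=
            Finset.sum_congr rfl fun k _ => Finset.sum_comm
        _ = ∑ k, ∑ i, (a k i pp.1 * bhat k pp.2) *
              (a k i ⬝ᵥ (P * U).mulVec (bhat k)) := by
            refine Finset.sum_congr rfl fun k _ => Finset.sum_congr rfl fun i _ => ?_
            rw [← Finset.mul_sum, hdot k i]
    have hL : (P * U - s • H₀) pp.1 pp.2 = x pp - s *
        ∑ k, ∑ i, (a k i ⬝ᵥ (P * U).mulVec (bhat k)) * (a k i pp.1 * bhat k pp.2) := by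
      rw [hH₀def]
      simp only [Matrix.sub_apply, Matrix.smul_apply, smul_eq_mul, Matrix.sum_apply,
        Matrix.vecMulVec_apply, hx]
    have hRr : ((1 - s • Hess).mulVec x) pp = x pp - s * (Hess.mulVec x) pp := by
      rw [Matrix.sub_mulVec, Matrix.one_mulVec, Matrix.smul_mulVec]
      simp
    rw [hL, hRr, hHa]
    congr 1
    rw [Finset.mul_sum, Finset.mul_sum]
    refine Finset.sum_congr rfl fun k _ => ?_
    rw [Finset.mul_sum, Finset.mul_sum]
    exact Finset.sum_congr rfl fun i _ => by ring
  have h3 : frob (P * U - s • H₀) ≤ spec (1 - s • Hess) * frob (P * U) := by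
    have e : frob (P * U - s • H₀) =
        vnorm ((1 - s • Hess).mulVec (fun pq : Fin n × Fin r => (P * U) pq.1 pq.2)) := by
      rw [frob_eq_vnorm]
      congr 1
      funext pp
      exact key pp
    rw [e, frob_eq_vnorm (P * U)]
    exact spec_mulVec_le _ _
  have hD2 : frob (P * (U - s • G)) ≤
      spec (1 - s • Hess) * frob (P * U) + s * frob (P * T) := by
    rw [hD]
    refine (frob_add_le _ _).trans ?_
    have h1 : frob (P * (P * U - s • H₀)) ≤ frob (P * U - s • H₀) := hfrobP _
    have h2 : frob (s • (P * T)) = s * frob (P * T) := by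
      rw [frob_smul, abs_of_pos hs]
    linarith
  -- conclusion
  calc frob (P * Uplus) ≤ (1 / c) * frob (P * (U - s • G)) := main1
  _ ≤ (1 / c) * (spec (1 - s • Hess) * frob (P * U) + s * frob (P * T)) :=
      mul_le_mul_of_nonneg_left hD2 (by positivity)
  _ = (spec (1 - s • Hess) * frob (P * U) + s * frob (P * T)) / c :=
      one_div_mul_eq_div _ _
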